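/- Assume r>0, ρ>0, α∈(0,1], γ>0 with γ≠1, and δ ≥ r+ρ(1−α). Set y_α := α^{−γ}/(1+ρx̲). Let y:(0,α^{−γ}] → (0, y_α] be a strictly increasing solution of the dual ODE with y(α^{−γ}) = y_α and 0 < y(ψ) < (δ/(r+ρ))ψ for 0<ψ<α^{−γ}, and let ψ denote its inverse function on (0,y_α]. Define u(y) := (1/δ)[(γ/(1−γ))ψ(y)^{1−1/γ} + ((r+ρ−δ)/ρ)(ψ(y)−y)] for 0<y≤y_α. Then u is strictly decreasing and strictly convex on (0,y_α], its derivative satisfies u'(y) = 1/ρ − ψ(y)/(ρy), u satisfies (r+ρ−δ)·y·u'(y) + δ·u(y) = (γ/(1−γ))(y − ρ y u'(y))^{1−1/γ} for 0<y<y_α, and u'(y_α) = −x̲, equivalently y_α − ρ y_α u'(y_α) = α^{−γ}. -/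

import Mathlib

open Topology Set Filter

set_option maxHeartbeats 1000000 in
theorem u_impatient (r ρ α γ δ yα : ℝ)
    (hr : 0 < r) (hρ : 0 < ρ) (hα : α ∈ Set.Ioc (0:ℝ) 1)
    (hγ : 0 < γ) (hγ1 : γ ≠ 1) (hδ : r + ρ * (1 - α) ≤ δ)
    (hyα : yα = α ^ (-γ) / (1 + ρ * (α / (r + ρ * (1 - α)))))
    (y ψf u : ℝ → ℝ)
    (hy_mono : StrictMonoOn y (Set.Ioc 0 (α ^ (-γ))))
    (hy_cont : ContinuousOn y (Set.Ioc 0 (α ^ (-γ))))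
    (hy_maps : ∀ s ∈ Set.Ioc (0:ℝ) (α ^ (-γ)), y s ∈ Set.Ioc 0 yα)
    (hy_term : y (α ^ (-γ)) = yα)
    (hy_ode : ∀ s ∈ Set.Ioo (0:ℝ) (α ^ (-γ)),
      HasDerivAt y
        ((ρ / (r + ρ) * ((r + ρ - δ) / ρ - s ^ (-(1 / γ))) * y s) /
          (y s - δ / (r + ρ) * s)) s)
    (hy_bound : ∀ s ∈ Set.Ioo (0:ℝ) (α ^ (-γ)), 0 < y s ∧ y s < δ / (r + ρ) * s)
    (hinv_left : ∀ s ∈ Set.Ioc (0:ℝ) (α ^ (-γ)), ψf (y s) = s)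
    (hinv_right : ∀ v ∈ Set.Ioc (0:ℝ) yα,
      ψf v ∈ Set.Ioc 0 (α ^ (-γ)) ∧ y (ψf v) = v)
    (hu : ∀ v ∈ Set.Ioc (0:ℝ) yα,
      u v = (1 / δ) *
        (γ / (1 - γ) * (ψf v) ^ (1 - 1 / γ) + (r + ρ - δ) / ρ * (ψf v - v))) :
    StrictAntiOn u (Set.Ioc 0 yα) ∧
    StrictConvexOn ℝ (Set.Ioc 0 yα) u ∧
    (∀ v ∈ Set.Ioc (0:ℝ) yα,
      HasDerivWithinAt u (1 / ρ - ψf v / (ρ * v)) (Set.Ioc 0 yα) v) ∧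
    (∀ v ∈ Set.Ioo (0:ℝ) yα,
      (r + ρ - δ) * v * (1 / ρ - ψf v / (ρ * v)) + δ * u v
        = γ / (1 - γ) * (v - ρ * v * (1 / ρ - ψf v / (ρ * v))) ^ (1 - 1 / γ)) ∧
    (1 / ρ - ψf yα / (ρ * yα) = -(α / (r + ρ * (1 - α)))) ∧
    (yα - ρ * yα * (1 / ρ - ψf yα / (ρ * yα)) = α ^ (-γ)) := by
  obtain ⟨hα0, hα1⟩ := hα
  have hγ0 : γ ≠ 0 := ne_of_gt hγ
  have hγ1' : (1:ℝ) - γ ≠ 0 := sub_ne_zero.mpr (Ne.symm hγ1)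
  have hD : 0 < r + ρ * (1 - α) := by nlinarith
  have hδ0 : 0 < δ := lt_of_lt_of_le hD hδ
  have hrρ : 0 < r + ρ := by linarith
  have hA : 0 < α ^ (-γ) := Real.rpow_pos_of_pos hα0 _
  have hxb : 0 < α / (r + ρ * (1 - α)) := div_pos hα0 hD
  have h1x : 0 < 1 + ρ * (α / (r + ρ * (1 - α))) := by nlinarith [mul_pos hρ hxb]
  have hρne : ρ ≠ 0 := hρ.ne'
  have hDne : r + ρ * (1 - α) ≠ 0 := hD.ne'
  have hrρne : r + ρ ≠ 0 := hrρ.ne'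
  have hAne : α ^ (-γ) ≠ 0 := hA.ne'
  have hδne : δ ≠ 0 := hδ0.ne'
  have hyα0 : 0 < yα := by rw [hyα]; exact div_pos hA h1x
  have hyαne : yα ≠ 0 := hyα0.ne'
  have hyαA : yα < α ^ (-γ) := by
    rw [hyα]; exact div_lt_self hA (by nlinarith [mul_pos hρ hxb])
  have hyαval : yα = α ^ (-γ) * (r + ρ * (1 - α)) / (r + ρ) := by
    rw [hyα]; field_simp; ring
  have hψyα : ψf yα = α ^ (-γ) := by
    have := hinv_left (α ^ (-γ)) ⟨hA, le_rfl⟩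
    rwa [hy_term] at this
  have item5 : 1 / ρ - ψf yα / (ρ * yα) = -(α / (r + ρ * (1 - α))) := by
    rw [hψyα, hyαval]; field_simp; ring
  have item6 : yα - ρ * yα * (1 / ρ - ψf yα / (ρ * yα)) = α ^ (-γ) := by
    rw [hψyα]; field_simp; ring
  have hvs : ∀ v : ℝ, v ≠ 0 → v - ρ * v * (1 / ρ - ψf v / (ρ * v)) = ψf v := by
    intro v hv; field_simp; ring
  have item4 : ∀ v ∈ Set.Ioo (0:ℝ) yα,
      (r + ρ - δ) * v * (1 / ρ - ψf v / (ρ * v)) + δ * u v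
        = γ / (1 - γ) * (v - ρ * v * (1 / ρ - ψf v / (ρ * v))) ^ (1 - 1 / γ) := by
    intro v hv
    have hvne : v ≠ 0 := hv.1.ne'
    rw [hvs v hvne, hu v ⟨hv.1, hv.2.le⟩]
    generalize (ψf v) ^ (1 - 1/γ) = P
    field_simp
    ring
  -- exponent facts
  have hApow : (α ^ (-γ)) ^ (-(1/γ)) = α := by
    rw [← Real.rpow_mul hα0.le, show (-γ) * (-(1/γ)) = 1 by field_simp, Real.rpow_one]
  have hq : ∀ s ∈ Set.Ioo (0:ℝ) (α ^ (-γ)), α < s ^ (-(1/γ)) := by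
    intro s hs
    have h2 := Real.rpow_lt_rpow_of_neg hs.1 hs.2 (neg_lt_zero.mpr (by positivity : (0:ℝ) < 1/γ))
    rwa [hApow] at h2
  have hcq : ∀ s ∈ Set.Ioo (0:ℝ) (α ^ (-γ)), (r + ρ - δ) / ρ - s ^ (-(1/γ)) < 0 := by
    intro s hs
    have h1 := hq s hs
    have h2 : (r + ρ - δ) / ρ ≤ α := by rw [div_le_iff₀ hρ]; nlinarith
    linarith
  have hspow : ∀ s : ℝ, 0 < s → s ^ (1 - 1/γ) = s * s ^ (-(1/γ)) := by
    intro s hs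
    rw [show (1:ℝ) - 1/γ = 1 + -(1/γ) by ring, Real.rpow_add hs, Real.rpow_one]
  have hmulpow : ∀ s : ℝ, 0 < s → s * s ^ (-(1/γ) - 1) = s ^ (-(1/γ)) := by
    intro s hs
    rw [Real.rpow_sub hs, Real.rpow_one]; field_simp
  have hfact : ∀ s q' w : ℝ,
      (ρ / (r + ρ) * ((r + ρ - δ) / ρ - q') * w) * s - w * (w - δ / (r + ρ) * s)
        = w * ((s - ρ / (r + ρ) * (s * s ^ (-(1/γ)))) - w) + w * (ρ / (r + ρ) * (s * s ^ (-(1/γ))) - ρ / (r + ρ) * (s * q')) := by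
    intro s q' w; field_simp; ring
  -- simple version of hfact with q' := s ^ (-(1/γ))
  have hfact' : ∀ s w : ℝ,
      (ρ / (r + ρ) * ((r + ρ - δ) / ρ - s ^ (-(1/γ))) * w) * s - w * (w - δ / (r + ρ) * s)
        = w * ((s - ρ / (r + ρ) * (s * s ^ (-(1/γ)))) - w) := by
    intro s w
    have := hfact s (s ^ (-(1/γ))) w
    linarith [this]
  -- ==================== barrier ====================
  have hbar : ∀ s ∈ Set.Ioo (0:ℝ) (α ^ (-γ)),
      s - ρ / (r + ρ) * (s * s ^ (-(1/γ))) < y s := by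
    by_contra hcon
    push_neg at hcon
    obtain ⟨s0, hs0, hle0⟩ := hcon
    set F : ℝ → ℝ := fun s => y s - (s - ρ / (r + ρ) * (s * s ^ (-(1/γ)))) with hF
    have hFcont : ContinuousOn F (Set.Ioc 0 (α ^ (-γ))) := by
      apply hy_cont.sub
      apply ContinuousOn.sub continuousOn_id
      have hrp : ContinuousOn (fun s : ℝ => s ^ (-(1/γ))) (Set.Ioc 0 (α ^ (-γ))) :=
        fun x hx => (Real.continuousAt_rpow_const x _ (Or.inl hx.1.ne')).continuousWithinAt
      exact continuousOn_const.mul (continuousOn_id.mul hrp)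
    have hFA : F (α ^ (-γ)) = 0 := by
      simp only [hF]
      rw [hy_term, hApow, hyαval]
      field_simp
      ring
    have hFderiv : ∀ x ∈ Set.Ioo (0:ℝ) (α ^ (-γ)), F x ≤ 0 → ∃ d, HasDerivAt F d x ∧ d < 0 := by
      intro x hx hFle
      obtain ⟨hw0, hwlt⟩ := hy_bound x hx
      have hden : y x - δ / (r + ρ) * x < 0 := by linarith
      have hM := hy_ode x hx
      have hq0 : (0:ℝ) < x ^ (-(1/γ)) := Real.rpow_pos_of_pos hx.1 _
      have hrpowd : HasDerivAt (fun s : ℝ => s * s ^ (-(1/γ)))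
          (1 * x ^ (-(1/γ)) + x * (-(1/γ) * x ^ (-(1/γ) - 1))) x :=
        (hasDerivAt_id' (𝕜 := ℝ) (x := x)).mul (Real.hasDerivAt_rpow_const (Or.inl hx.1.ne'))
      have e1 : (1:ℝ) * x ^ (-(1/γ)) + x * (-(1/γ) * x ^ (-(1/γ) - 1))
          = (1 - 1/γ) * x ^ (-(1/γ)) := by
        linear_combination (-(1/γ)) * hmulpow x hx.1
      rw [e1] at hrpowd
      have hFd : HasDerivAt F
          ((ρ / (r + ρ) * ((r + ρ - δ) / ρ - x ^ (-(1 / γ))) * y x) / (y x - δ / (r + ρ) * x)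
            - (1 - ρ / (r + ρ) * ((1 - 1/γ) * x ^ (-(1/γ))))) x :=
        hM.sub ((hasDerivAt_id' (𝕜 := ℝ) (x := x)).sub (hrpowd.const_mul (ρ / (r + ρ))))
      refine ⟨_, hFd, ?_⟩
      -- value < 0
      have hle' : y x ≤ x - ρ / (r + ρ) * (x * x ^ (-(1/γ))) := by
        simp only [hF] at hFle; linarith
      have hMx : (ρ / (r + ρ) * ((r + ρ - δ) / ρ - x ^ (-(1 / γ))) * y x) / (y x - δ / (r + ρ) * x) * x
          ≤ y x := by
        rw [div_mul_eq_mul_div, div_le_iff_of_neg hden]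
        have hf := hfact' x (y x)
        nlinarith [mul_nonneg hw0.le (sub_nonneg.mpr hle')]
      have h3 : (ρ / (r + ρ) * ((r + ρ - δ) / ρ - x ^ (-(1 / γ))) * y x) / (y x - δ / (r + ρ) * x)
          ≤ 1 - ρ / (r + ρ) * x ^ (-(1/γ)) := by
        apply le_of_mul_le_mul_right _ hx.1
        calc (ρ / (r + ρ) * ((r + ρ - δ) / ρ - x ^ (-(1 / γ))) * y x) / (y x - δ / (r + ρ) * x) * x
            ≤ y x := hMx
          _ ≤ (1 - ρ / (r + ρ) * x ^ (-(1/γ))) * x := by nlinarith [hle']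
      have hpos : 0 < ρ / (r + ρ) * x ^ (-(1/γ)) * (1/γ) := by positivity
      nlinarith [h3, hpos]
    have hs0F : F s0 ≤ 0 := by simp only [hF]; linarith
    obtain ⟨s1, hs1, hFs1⟩ : ∃ s1 ∈ Set.Ioo (0:ℝ) (α ^ (-γ)), F s1 < 0 := by
      rcases lt_or_eq_of_le hs0F with h | h
      · exact ⟨s0, hs0, h⟩
      · obtain ⟨d, hdF, hdneg⟩ := hFderiv s0 hs0 hs0F
        have hslope := hasDerivAt_iff_tendsto_slope.mp hdF
        have hmono : 𝓝[>] s0 ≤ 𝓝[≠] s0 :=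
          nhdsWithin_mono _ (fun x hx => ne_of_gt hx)
        have hev : ∀ᶠ x in 𝓝[>] s0, slope F s0 x < 0 :=
          (hslope.mono_left hmono).eventually_lt_const hdneg
        have hev2 : ∀ᶠ x in 𝓝[>] s0, x ∈ Set.Ioo s0 (α ^ (-γ)) :=
          Ioo_mem_nhdsGT_of_mem ⟨le_refl s0, hs0.2⟩
        obtain ⟨x, hx1, hx2⟩ := (hev.and hev2).exists
        have hxs : 0 < x - s0 := sub_pos.mpr hx2.1
        rw [slope_def_field] at hx1
        have hFx : F x - F s0 < 0 := by
          have := (div_lt_iff₀ hxs).mp hx1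
          linarith
        exact ⟨x, ⟨lt_trans hs0.1 hx2.1, hx2.2⟩, by rw [← h] at hFx ⊢; linarith⟩
    set T := Set.Icc s1 (α ^ (-γ)) ∩ F ⁻¹' (Set.Ici 0) with hT
    have hIccsub : Set.Icc s1 (α ^ (-γ)) ⊆ Set.Ioc 0 (α ^ (-γ)) :=
      fun t ht => ⟨lt_of_lt_of_le hs1.1 ht.1, ht.2⟩
    have hTclosed : IsClosed T :=
      (hFcont.mono hIccsub).preimage_isClosed_of_isClosed isClosed_Icc isClosed_Ici
    have hTne : (α ^ (-γ)) ∈ T := ⟨⟨hs1.2.le, le_rfl⟩, by simpa using hFA.ge⟩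
    have hbdd : BddBelow T := ⟨s1, fun t ht => ht.1.1⟩
    have ht0 : sInf T ∈ T := hTclosed.csInf_mem ⟨_, hTne⟩ hbdd
    have hs1t0 : s1 < sInf T := by
      rcases lt_or_eq_of_le ht0.1.1 with h | h
      · exact h
      · exfalso
        have : (0:ℝ) ≤ F s1 := by
          have := ht0.2
          rw [← h] at this
          exact this
        linarith
    have hIco : ∀ x ∈ Set.Ico s1 (sInf T), F x < 0 := by
      intro x hx
      by_contra hge; push_neg at hge
      have hxT : x ∈ T := ⟨⟨hx.1, le_trans hx.2.le ht0.1.2⟩, hge⟩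
      exact absurd (csInf_le hbdd hxT) (not_le.mpr hx.2)
    have hanti : StrictAntiOn F (Set.Icc s1 (sInf T)) := by
      apply strictAntiOn_of_deriv_neg (convex_Icc _ _)
      · exact hFcont.mono (fun x hx => ⟨lt_of_lt_of_le hs1.1 hx.1, le_trans hx.2 ht0.1.2⟩)
      · intro x hx
        rw [interior_Icc] at hx
        have hxIoo : x ∈ Set.Ioo (0:ℝ) (α ^ (-γ)) :=
          ⟨lt_trans hs1.1 hx.1, lt_of_lt_of_le hx.2 ht0.1.2⟩
        obtain ⟨d, hdF, hdneg⟩ := hFderiv x hxIoo (le_of_lt (hIco x ⟨hx.1.le, hx.2⟩))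
        rwa [hdF.deriv]
    have hlt := hanti (left_mem_Icc.mpr hs1t0.le) (right_mem_Icc.mpr hs1t0.le) hs1t0
    have : (0:ℝ) ≤ F (sInf T) := ht0.2
    linarith
  -- ==================== inverse function facts ====================
  have hψmem : ∀ v ∈ Set.Ioo (0:ℝ) yα, ψf v ∈ Set.Ioo 0 (α ^ (-γ)) ∧ y (ψf v) = v := by
    intro v hv
    obtain ⟨hs, hyv⟩ := hinv_right v ⟨hv.1, hv.2.le⟩
    refine ⟨⟨hs.1, lt_of_le_of_ne hs.2 ?_⟩, hyv⟩
    intro h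
    rw [h, hy_term] at hyv
    exact (ne_of_lt hv.2) hyv.symm
  have hψmono : StrictMonoOn ψf (Set.Ioc 0 yα) := by
    intro a ha b hb hab
    obtain ⟨hsa, hya⟩ := hinv_right a ha
    obtain ⟨hsb, hyb⟩ := hinv_right b hb
    by_contra hle; push_neg at hle
    rcases eq_or_lt_of_le hle with h | h
    · rw [← hya, ← hyb, h] at hab; exact lt_irrefl _ hab
    · have := hy_mono hsb hsa h
      rw [hya, hyb] at this; linarith
  have hψcontAt : ∀ v ∈ Set.Ioo (0:ℝ) yα, ContinuousAt ψf v := by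
    intro v hv
    obtain ⟨hsv, hyv⟩ := hψmem v hv
    apply StrictMonoOn.continuousAt_of_exists_between
      (hψmono.mono Set.Ioo_subset_Ioc_self) (isOpen_Ioo.mem_nhds hv)
    · intro b hb
      have ht1 : max b (ψf v / 2) < ψf v := max_lt hb (by linarith [hsv.1])
      have ht0 : 0 < max b (ψf v / 2) :=
        lt_of_lt_of_le (by linarith [hsv.1] : (0:ℝ) < ψf v / 2) (le_max_right _ _)
      have htA : max b (ψf v / 2) ∈ Set.Ioc 0 (α ^ (-γ)) :=
        ⟨ht0, le_of_lt (lt_trans ht1 hsv.2)⟩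
      refine ⟨y (max b (ψf v / 2)), ⟨(hy_maps _ htA).1, ?_⟩, ?_⟩
      · rw [← hy_term]
        exact hy_mono htA ⟨hA, le_rfl⟩ (lt_trans ht1 hsv.2)
      · rw [hinv_left _ htA]; exact ⟨le_max_left _ _, ht1⟩
    · intro b hb
      have ht1 : ψf v < min b ((ψf v + α ^ (-γ)) / 2) := lt_min hb (by linarith [hsv.2])
      have htA' : min b ((ψf v + α ^ (-γ)) / 2) < α ^ (-γ) :=
        lt_of_le_of_lt (min_le_right _ _) (by linarith [hsv.2])
      have htA : min b ((ψf v + α ^ (-γ)) / 2) ∈ Set.Ioc 0 (α ^ (-γ)) :=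
        ⟨lt_trans hsv.1 ht1, htA'.le⟩
      refine ⟨y (min b ((ψf v + α ^ (-γ)) / 2)), ⟨(hy_maps _ htA).1, ?_⟩, ?_⟩
      · rw [← hy_term]
        exact hy_mono htA ⟨hA, le_rfl⟩ htA'
      · rw [hinv_left _ htA]; exact ⟨ht1, min_le_left _ _⟩
  have hψcwa : ContinuousWithinAt ψf (Set.Iic yα) yα := by
    apply StrictMonoOn.continuousWithinAt_left_of_exists_between hψmono
    · rw [show Set.Ioc (0:ℝ) yα = Set.Ioi 0 ∩ Set.Iic yα from (Set.Ioi_inter_Iic).symm]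
      exact inter_mem (mem_nhdsWithin_of_mem_nhds (Ioi_mem_nhds hyα0)) self_mem_nhdsWithin
    · intro b hb
      rw [hψyα] at hb
      have ht1 : max b (α ^ (-γ) / 2) < α ^ (-γ) := max_lt hb (by linarith)
      have ht0 : 0 < max b (α ^ (-γ) / 2) :=
        lt_of_lt_of_le (by linarith : (0:ℝ) < α ^ (-γ) / 2) (le_max_right _ _)
      refine ⟨y (max b (α ^ (-γ) / 2)), hy_maps _ ⟨ht0, ht1.le⟩, ?_⟩
      rw [hinv_left _ ⟨ht0, ht1.le⟩, hψyα]
      exact ⟨le_max_left _ _, ht1⟩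
  have hψcont : ContinuousOn ψf (Set.Ioc 0 yα) := by
    intro v hv
    rcases eq_or_lt_of_le hv.2 with h | h
    · rw [h]
      exact hψcwa.mono (fun x hx => hx.2)
    · exact (hψcontAt v ⟨hv.1, h⟩).continuousWithinAt
  have hucont : ContinuousOn u (Set.Ioc 0 yα) := by
    have hc : ContinuousOn (fun v => (1 / δ) *
        (γ / (1 - γ) * (ψf v) ^ (1 - 1 / γ) + (r + ρ - δ) / ρ * (ψf v - v))) (Set.Ioc 0 yα) := by
      apply ContinuousOn.mul continuousOn_const
      apply ContinuousOn.add
      · exact continuousOn_const.mul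
          (hψcont.rpow_const (fun v hv => Or.inl (hinv_right v hv).1.1.ne'))
      · exact continuousOn_const.mul (hψcont.sub continuousOn_id)
    exact hc.congr (fun v hv => hu v hv)
  -- algebra for u'
  have hualg : ∀ v s q' : ℝ, v ≠ 0 →
      ρ / (r + ρ) * ((r + ρ - δ) / ρ - q') * v ≠ 0 →
      1 / δ * (γ / (1 - γ) * (((ρ / (r + ρ) * ((r + ρ - δ) / ρ - q') * v) / (v - δ / (r + ρ) * s))⁻¹ * (1 - 1/γ) * q')
        + (r + ρ - δ) / ρ * (((ρ / (r + ρ) * ((r + ρ - δ) / ρ - q') * v) / (v - δ / (r + ρ) * s))⁻¹ - 1))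
      = 1 / ρ - s / (ρ * v) := by
    intro v s q' hv hnum
    rw [inv_div]
    have hρv : ρ * v ≠ 0 := mul_ne_zero hρne hv
    have key : ((r + ρ - δ) / ρ - q') * ((v - δ / (r + ρ) * s) / (ρ / (r + ρ) * ((r + ρ - δ) / ρ - q') * v))
        = ((r + ρ) * v - δ * s) / (ρ * v) := by
      rw [mul_div_assoc', div_eq_div_iff hnum hρv]
      field_simp
    have hcoef : γ / (1 - γ) * (1 - 1/γ) = -1 := by field_simp; ring
    have h2 : γ / (1 - γ) * ((v - δ / (r + ρ) * s) / (ρ / (r + ρ) * ((r + ρ - δ) / ρ - q') * v) * (1 - 1/γ) * q')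
          + (r + ρ - δ) / ρ * ((v - δ / (r + ρ) * s) / (ρ / (r + ρ) * ((r + ρ - δ) / ρ - q') * v) - 1)
        = ((r + ρ - δ) / ρ - q') * ((v - δ / (r + ρ) * s) / (ρ / (r + ρ) * ((r + ρ - δ) / ρ - q') * v))
          - (r + ρ - δ) / ρ := by
      linear_combination ((v - δ / (r + ρ) * s) / (ρ / (r + ρ) * ((r + ρ - δ) / ρ - q') * v) * q') * hcoef
    rw [h2, key]
    field_simp
    ring
  -- ==================== main interior facts ====================
  have hmain : ∀ v ∈ Set.Ioo (0:ℝ) yα, HasDerivAt u (1 / ρ - ψf v / (ρ * v)) v ∧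
      ∃ d, HasDerivAt (fun x => 1 / ρ - ψf x / (ρ * x)) d v ∧ 0 < d := by
    intro v hv
    obtain ⟨hsv, hyv⟩ := hψmem v hv
    have hden : v - δ / (r + ρ) * ψf v < 0 := by
      have h := (hy_bound _ hsv).2; rw [hyv] at h; linarith
    have hcqv := hcq _ hsv
    have hnum_neg : ρ / (r + ρ) * ((r + ρ - δ) / ρ - (ψf v) ^ (-(1/γ))) * v < 0 := by
      have h1 : 0 < ρ / (r + ρ) := by positivity
      nlinarith [mul_neg_of_pos_of_neg (mul_pos h1 hv.1) hcqv]
    have hm : HasDerivAt y ((ρ / (r + ρ) * ((r + ρ - δ) / ρ - (ψf v) ^ (-(1/γ))) * v) /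
        (v - δ / (r + ρ) * ψf v)) (ψf v) := by
      have h := hy_ode _ hsv; rwa [hyv] at h
    have hmpos : 0 < (ρ / (r + ρ) * ((r + ρ - δ) / ρ - (ψf v) ^ (-(1/γ))) * v) /
        (v - δ / (r + ρ) * ψf v) := div_pos_of_neg_of_neg hnum_neg hden
    have hψ' : HasDerivAt ψf ((ρ / (r + ρ) * ((r + ρ - δ) / ρ - (ψf v) ^ (-(1/γ))) * v) /
        (v - δ / (r + ρ) * ψf v))⁻¹ v := by
      apply HasDerivAt.of_local_left_inverse (hψcontAt v hv) hm hmpos.ne'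
      filter_upwards [isOpen_Ioo.mem_nhds hv] with x hx
      exact (hinv_right x ⟨hx.1, hx.2.le⟩).2
    -- derivative of u
    have hexpr := (((hψ'.rpow_const (p := 1 - 1/γ) (Or.inl hsv.1.ne')).const_mul (γ / (1 - γ))).add
        ((hψ'.sub (hasDerivAt_id' (𝕜 := ℝ) (x := v))).const_mul ((r + ρ - δ) / ρ))).const_mul (1 / δ)
    rw [show (1:ℝ) - 1/γ - 1 = -(1/γ) by ring] at hexpr
    have huev : u =ᶠ[𝓝 v] fun x => 1 / δ *
        (γ / (1 - γ) * (ψf x) ^ (1 - 1 / γ) + (r + ρ - δ) / ρ * (ψf x - x)) := by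
      filter_upwards [isOpen_Ioo.mem_nhds hv] with x hx
      exact hu x ⟨hx.1, hx.2.le⟩
    have hud := hexpr.congr_of_eventuallyEq huev
    rw [hualg v (ψf v) ((ψf v) ^ (-(1/γ))) hv.1.ne' hnum_neg.ne] at hud
    refine ⟨hud, ?_⟩
    -- derivative of g
    have hbarv := hbar _ hsv
    rw [hyv] at hbarv
    have h6 : v < (ρ / (r + ρ) * ((r + ρ - δ) / ρ - (ψf v) ^ (-(1/γ))) * v) /
        (v - δ / (r + ρ) * ψf v) * ψf v := by
      rw [div_mul_eq_mul_div, lt_div_iff_of_neg hden]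
      have hf := hfact' (ψf v) v
      nlinarith [mul_neg_of_pos_of_neg hv.1 (by linarith :
        (ψf v - ρ / (r + ρ) * (ψf v * (ψf v) ^ (-(1/γ)))) - v < 0)]
    have h7 : ((ρ / (r + ρ) * ((r + ρ - δ) / ρ - (ψf v) ^ (-(1/γ))) * v) /
        (v - δ / (r + ρ) * ψf v))⁻¹ * v < ψf v := by
      have h8 := mul_lt_mul_of_pos_left h6 (inv_pos.mpr hmpos)
      rwa [← mul_assoc, inv_mul_cancel₀ hmpos.ne', one_mul] at h8
    have hgd : HasDerivAt (fun x => ψf x / (ρ * x))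
        ((((ρ / (r + ρ) * ((r + ρ - δ) / ρ - (ψf v) ^ (-(1/γ))) * v) /
          (v - δ / (r + ρ) * ψf v))⁻¹ * (ρ * v) - ψf v * (ρ * 1)) / (ρ * v) ^ 2) v :=
      hψ'.div ((hasDerivAt_id' (𝕜 := ℝ) (x := v)).const_mul ρ) (mul_ne_zero hρne hv.1.ne')
    have hgd' := (hasDerivAt_const v (1 / ρ)).sub hgd
    refine ⟨_, hgd', ?_⟩
    have hnum2 : (((ρ / (r + ρ) * ((r + ρ - δ) / ρ - (ψf v) ^ (-(1/γ))) * v) /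
        (v - δ / (r + ρ) * ψf v))⁻¹ * (ρ * v) - ψf v * (ρ * 1)) < 0 := by
      nlinarith [mul_lt_mul_of_pos_left h7 hρ]
    have hsq : (0:ℝ) < (ρ * v) ^ 2 := pow_pos (mul_pos hρ hv.1) 2
    have := div_neg_of_neg_of_pos hnum2 hsq
    linarith
  -- ==================== assemble ====================
  have hderivu : ∀ x ∈ Set.Ioo (0:ℝ) yα, deriv u x = 1 / ρ - ψf x / (ρ * x) :=
    fun x hx => ((hmain x hx).1).deriv
  have hgmono : StrictMonoOn (fun x => 1 / ρ - ψf x / (ρ * x)) (Set.Ioo 0 yα) := by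
    apply strictMonoOn_of_deriv_pos (convex_Ioo _ _)
    · apply ContinuousOn.sub continuousOn_const
      exact ContinuousOn.div (hψcont.mono Set.Ioo_subset_Ioc_self)
        (continuousOn_const.mul continuousOn_id)
        (fun x hx => mul_ne_zero hρne hx.1.ne')
    · intro x hx
      rw [interior_Ioo] at hx
      obtain ⟨-, d, hd, hdpos⟩ := hmain x hx
      rwa [hd.deriv]
  have hconv : StrictConvexOn ℝ (Set.Ioc 0 yα) u := by
    apply StrictMonoOn.strictConvexOn_of_deriv (convex_Ioc _ _) hucont
    rw [interior_Ioc]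
    intro a ha b hb hab
    rw [hderivu a ha, hderivu b hb]
    exact hgmono ha hb hab
  have hIooMem : Set.Ioo (0:ℝ) yα ∈ 𝓝[<] yα := Ioo_mem_nhdsLT_of_mem ⟨hyα0, le_rfl⟩
  have hgtend : Tendsto (fun x => 1 / ρ - ψf x / (ρ * x)) (𝓝[<] yα)
      (𝓝 (1 / ρ - ψf yα / (ρ * yα))) := by
    have h1 : Tendsto ψf (𝓝[<] yα) (𝓝 (ψf yα)) := hψcwa.mono Set.Iio_subset_Iic_self
    have h2 : Tendsto (fun x : ℝ => ρ * x) (𝓝[<] yα) (𝓝 (ρ * yα)) :=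
      ((continuous_const.mul continuous_id).tendsto yα).mono_left nhdsWithin_le_nhds
    exact tendsto_const_nhds.sub (h1.div h2 (mul_ne_zero hρne hyαne))
  have hend : HasDerivWithinAt u (1 / ρ - ψf yα / (ρ * yα)) (Set.Iic yα) yα := by
    apply hasDerivWithinAt_Iic_of_tendsto_deriv
    · exact fun x hx => ((hmain x hx).1).differentiableAt.differentiableWithinAt
    · exact (hucont yα ⟨hyα0, le_rfl⟩).mono Set.Ioo_subset_Ioc_self
    · exact hIooMem
    · apply hgtend.congr'
      filter_upwards [hIooMem] with x hx
      exact (hderivu x hx).symm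
  have item3 : ∀ v ∈ Set.Ioc (0:ℝ) yα,
      HasDerivWithinAt u (1 / ρ - ψf v / (ρ * v)) (Set.Ioc 0 yα) v := by
    intro v hv
    rcases eq_or_lt_of_le hv.2 with h | h
    · rw [h]
      exact hend.mono (fun x hx => hx.2)
    · exact ((hmain v ⟨hv.1, h⟩).1).hasDerivWithinAt
  have hgyα : 1 / ρ - ψf yα / (ρ * yα) < 0 := by
    rw [item5]; exact neg_lt_zero.mpr hxb
  have hgneg : ∀ x ∈ Set.Ioo (0:ℝ) yα, 1 / ρ - ψf x / (ρ * x) < 0 := by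
    intro x hx
    have hxw : x < (x + yα) / 2 := by linarith [hx.2]
    have hwIoo : (x + yα) / 2 ∈ Set.Ioo (0:ℝ) yα :=
      ⟨by linarith [hx.1, hyα0], by linarith [hx.2]⟩
    have h1 := hgmono hx hwIoo hxw
    have h2 : (1 / ρ - ψf ((x + yα) / 2) / (ρ * ((x + yα) / 2)))
        ≤ 1 / ρ - ψf yα / (ρ * yα) := by
      apply ge_of_tendsto hgtend
      filter_upwards [Ioo_mem_nhdsLT_of_mem (⟨hwIoo.2, le_rfl⟩ : yα ∈ Set.Ioc ((x + yα) / 2) yα)]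
        with z hz
      exact (hgmono hwIoo ⟨lt_trans hwIoo.1 hz.1, hz.2⟩ hz.1).le
    linarith
  have hanti : StrictAntiOn u (Set.Ioc 0 yα) := by
    apply strictAntiOn_of_deriv_neg (convex_Ioc _ _) hucont
    intro x hx
    rw [interior_Ioc] at hx
    rw [hderivu x hx]
    exact hgneg x hx
  exact ⟨hanti, hconv, item3, item4, item5, item6⟩
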